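/- Let a < b be coprime positive integers and let ij and im be a,b-admissible diagonals of P_{b+1} with i < j < m (two admissible diagonals sharing their smaller endpoint). Then {ij, im} is a face of Ass(a,b), i.e., there exists an a,b-Dyck path D with {ij, im} ⊆ F(D). -/
import Mathlib


/-- `S(a,b) = { ⌊ib/a⌋ : i = 1, …, a-1 }`. -/
def Sab (a b : ℕ) : Finset ℕ := (Finset.Icc 1 (a - 1)).image (fun i => i * b / a)

/-- A diagonal of the polygon `P_{b+1}` with boundary points `0, 1, …, b`:
a pair `i < j` with `j - i ≥ 2` and `(i, j) ≠ (0, b)`. -/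
def IsDiagonal (b i j : ℕ) : Prop := i + 2 ≤ j ∧ j ≤ b ∧ ¬(i = 0 ∧ j = b)

/-- A diagonal `ij` is `a,b`-admissible if it separates `j - i - 1` and `b - j + i`
boundary points, both of which lie in `S(a,b)`. -/
def Admissible (a b : ℕ) (d : ℕ × ℕ) : Prop :=
  IsDiagonal b d.1 d.2 ∧ d.2 - d.1 - 1 ∈ Sab a b ∧ b - d.2 + d.1 ∈ Sab a b

/-- Two diagonals `ij` and `km` cross if `i < k < j < m` or `k < i < m < j`. -/
def Crosses (d d' : ℕ × ℕ) : Prop :=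
  (d.1 < d'.1 ∧ d'.1 < d.2 ∧ d.2 < d'.2) ∨ (d'.1 < d.1 ∧ d.1 < d'.2 ∧ d'.2 < d.2)

/-- An `a,b`-Dyck path: a north/east lattice path from `(0,0)` to `(b,a)` staying weakly
above `y = (a/b) x`.  It is encoded by the height `h u` of its unique east step over the
column interval `[u, u+1]`, for `0 ≤ u < b`; we normalize `h u = a` for `u ≥ b`. -/
structure DyckPath (a b : ℕ) where
  h : ℕ → ℕ
  mono : Monotone h
  norm : ∀ x, b ≤ x → h x = a
  above : ∀ x, x < b → a * (x + 1) ≤ b * h x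

/-- The lattice point `(x, y)` lies on `D` at the bottom of a north step of `D`. -/
def BottomNorth (a b : ℕ) (D : DyckPath a b) (x y : ℕ) : Prop :=
  x ≤ b ∧ (if x = 0 then 0 else D.h (x - 1)) ≤ y ∧ y < D.h x

/-- The laser of slope `a/b` fired northeast from the lattice point `(x, y)` of `D` first
hits `D` in the interior of the east step whose right endpoint has `x`-coordinate `k`;
the associated laser diagonal is `d(P) = (x, k)`.  The laser passes strictly below the
right endpoint of every earlier east step and strictly above the one it hits. -/
def IsLaserDiag (a b : ℕ) (D : DyckPath a b) (x y k : ℕ) : Prop :=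
  x < k ∧ k ≤ b ∧ b * D.h (k - 1) < b * y + a * (k - x) ∧
    ∀ u, x ≤ u → u + 1 < k → b * y + a * (u + 1 - x) < b * D.h u

/-- `F(D)`: the set of laser diagonals `d(P)` of the lattice points `P ≠ (0,0)` at the
bottoms of north steps of `D`. -/
def FD (a b : ℕ) (D : DyckPath a b) : Set (ℕ × ℕ) :=
  { d | ∃ y, BottomNorth a b D d.1 y ∧ (d.1, y) ≠ (0, 0) ∧ IsLaserDiag a b D d.1 y d.2 }

/-- A finite abstract simplicial complex on the ground set `E`: a downward closed
collection of finite subsets of `E`. -/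
structure AbsCplx (E : Type*) where
  faces : Set (Finset E)
  down : ∀ F ∈ faces, ∀ F' ⊆ F, F' ∈ faces

/-- The rational associahedron `Âss(a,b)`: faces are the sets of pairwise noncrossing
`a,b`-admissible diagonals. -/
def hatAss (a b : ℕ) : AbsCplx (ℕ × ℕ) where
  faces := { F | (∀ d ∈ F, Admissible a b d) ∧ ∀ d ∈ F, ∀ d' ∈ F, ¬Crosses d d' }
  down := fun F hF F' hsub =>
    ⟨fun d hd => hF.1 d (hsub hd), fun d hd d' hd' => hF.2 d (hsub hd) d' (hsub hd')⟩

/-- The rational associahedron `Ass(a,b)`: faces are the subsets of the sets `F(D)`,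
as `D` ranges over `a,b`-Dyck paths. -/
def Ass (a b : ℕ) : AbsCplx (ℕ × ℕ) where
  faces := { F | ∃ D : DyckPath a b, ∀ d ∈ F, d ∈ FD a b D }
  down := fun F hF F' hsub =>
    let ⟨D, hD⟩ := hF
    ⟨D, fun d hd => hD d (hsub hd)⟩


/-- Ceiling division helper: `ceilc a b n = ⌈a n / b⌉`. -/
private def ceilc (a b n : ℕ) : ℕ := (a * n + b - 1) / b

private lemma ceilc_bounds (a b n : ℕ) (hb : 0 < b) :
    a * n ≤ b * ceilc a b n ∧ b * ceilc a b n ≤ a * n + b - 1 := by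
  have h1 := Nat.div_add_mod (a * n + b - 1) b
  have h2 := Nat.mod_lt (a * n + b - 1) hb
  unfold ceilc
  omega

private lemma ceilc_mono (a b : ℕ) {n n' : ℕ} (h : n ≤ n') : ceilc a b n ≤ ceilc a b n' := by
  apply Nat.div_le_div_right
  have := Nat.mul_le_mul_left a h
  omega

private lemma ceilc_eq (a b n k : ℕ) (hb : 0 < b) (h1 : a * n ≤ b * k)
    (h2 : b * k < a * n + b) : ceilc a b n = k := by
  obtain ⟨l1, l2⟩ := ceilc_bounds a b n hb
  have e1 : b * (k + 1) = b * k + b := by ring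
  have e2 : b * (ceilc a b n + 1) = b * ceilc a b n + b := by ring
  have hq : ceilc a b n < k + 1 := Nat.lt_of_mul_lt_mul_left (a := b) (by omega)
  have hk : k < ceilc a b n + 1 := Nat.lt_of_mul_lt_mul_left (a := b) (by omega)
  omega

private lemma ceilc_strict (a b n : ℕ) (hb : 0 < b) (hcop : Nat.Coprime a b)
    (hn : 0 < n) (hnb : n < b) : a * n < b * ceilc a b n := by
  obtain ⟨l1, l2⟩ := ceilc_bounds a b n hb
  rcases lt_or_eq_of_le l1 with h | h
  · exact h
  · exfalso
    have hd : b ∣ a * n := ⟨ceilc a b n, h⟩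
    have hd2 : b ∣ n := (Nat.Coprime.symm hcop).dvd_of_dvd_mul_left hd
    rcases hd2 with ⟨c, rfl⟩
    rcases c with _ | c
    · omega
    · nlinarith

/-- The Dyck path used in the proof below. -/
private def pathH (a b i j m y1 : ℕ) : ℕ → ℕ := fun u =>
  if u < i then ceilc a b (u + 1)
  else if u + 2 ≤ j then (y1 + 1) + ceilc a b (u + 1 - i)
  else if u + 2 ≤ m then y1 + ceilc a b (u + 1 - i)
  else a

/-- Two `a,b`-admissible diagonals `ij` and `im` sharing their smaller endpoint
(`i < j < m`) form a face of `Ass(a,b)`. -/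
theorem pair_sharing_smaller_endpoint_mem_Ass (a b i j m : ℕ) (ha : 0 < a) (hab : a < b)
    (hcop : Nat.Coprime a b) (hij : i < j) (hjm : j < m)
    (h1 : Admissible a b (i, j)) (h2 : Admissible a b (i, m)) :
    ({(i, j), (i, m)} : Finset (ℕ × ℕ)) ∈ (Ass a b).faces := by
  obtain ⟨⟨hij2, hjb, -⟩, hS1, -⟩ := h1
  obtain ⟨⟨him2, hmb, hm0b⟩, hS2, -⟩ := h2
  simp only [Sab, Finset.mem_image, Finset.mem_Icc] at hS1 hS2
  obtain ⟨s, ⟨hs1, hs2⟩, hsf⟩ := hS1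
  obtain ⟨t, ⟨ht1, ht2⟩, htf⟩ := hS2
  have hb : 0 < b := ha.trans hab
  set P := j - i - 1 with hPdef
  set Q := m - i - 1 with hQdef
  have hjP : j = i + P + 1 := by omega
  have hmQ : m = i + Q + 1 := by omega
  have hPQ : P + 1 ≤ Q := by omega
  have hP1 : 1 ≤ P := by omega
  have hPb : P < b := by omega
  have hQb : Q < b := by omega
  -- floor facts
  have hsd := Nat.div_add_mod (s * b) a
  have hsm := Nat.mod_lt (s * b) ha
  rw [hsf] at hsd
  have htd := Nat.div_add_mod (t * b) a
  have htm := Nat.mod_lt (t * b) ha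
  rw [htf] at htd
  have hsb : s * b = b * s := mul_comm s b
  have htb : t * b = b * t := mul_comm t b
  have F1 : a * P ≤ b * s := by omega
  have F2 : b * s < a * P + a := by omega
  have F3 : a * Q ≤ b * t := by omega
  have F4 : b * t < a * Q + a := by omega
  set y1 := a - t with hy1def
  have hy1a : t + y1 = a := by omega
  have hy11 : 1 ≤ y1 := by omega
  have hba : b * t + b * y1 = b * a := by
    have h' : b * (t + y1) = b * t + b * y1 := by ring
    rw [hy1a] at h'
    omega
  have ham : a * i + a * Q + a = a * m := by rw [hmQ]; ring
  have hamb : a * m ≤ a * b := Nat.mul_le_mul_left a hmb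
  have hab2 : a * b = b * a := mul_comm a b
  have hai : a * i < b * y1 := by omega
  have haP1 : a * (P + 1) = a * P + a := by ring
  have haQ1 : a * (Q + 1) = a * Q + a := by ring
  have hbs1 : b * (s + 1) = b * s + b := by ring
  have hbt1 : b * (t + 1) = b * t + b := by ring
  have hcP : ceilc a b P = s := ceilc_eq a b P s hb (by omega) (by omega)
  have hcP1 : ceilc a b (P + 1) = s + 1 := ceilc_eq a b (P + 1) (s + 1) hb (by omega) (by omega)
  have hcQ : ceilc a b Q = t := ceilc_eq a b Q t hb (by omega) (by omega)
  -- branch evaluation of the path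
  have hpre : ∀ u, u < i → pathH a b i j m y1 u = ceilc a b (u + 1) := by
    intro u hu; simp only [pathH]; rw [if_pos hu]
  have hmid1 : ∀ u, i ≤ u → u + 2 ≤ j →
      pathH a b i j m y1 u = (y1 + 1) + ceilc a b (u + 1 - i) := by
    intro u hu1 hu2; simp only [pathH]; rw [if_neg (by omega), if_pos hu2]
  have hmid2 : ∀ u, i ≤ u → j ≤ u + 1 → u + 2 ≤ m →
      pathH a b i j m y1 u = y1 + ceilc a b (u + 1 - i) := by
    intro u hu1 hu2 hu3; simp only [pathH]
    rw [if_neg (by omega), if_neg (by omega), if_pos hu3]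
  have htail : ∀ u, m ≤ u + 1 → pathH a b i j m y1 u = a := by
    intro u hu; simp only [pathH]
    rw [if_neg (by omega), if_neg (by omega), if_neg (by omega)]
  -- the key bound `ceilc a b i ≤ y1`
  have hci : ceilc a b i ≤ y1 := by
    have hc := (ceilc_bounds a b i hb).2
    have hy : b * (y1 + 1) = b * y1 + b := by ring
    have := Nat.lt_of_mul_lt_mul_left (a := b)
      (show b * ceilc a b i < b * (y1 + 1) by omega)
    omega
  have hc1 : 1 ≤ ceilc a b 1 := by
    have hc := (ceilc_bounds a b 1 hb).1
    rcases Nat.eq_zero_or_pos (ceilc a b 1) with h | h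
    · rw [h] at hc; simp at hc; omega
    · exact h
  -- monotonicity
  have hmono : Monotone (pathH a b i j m y1) := by
    apply monotone_nat_of_le_succ
    intro u
    rcases lt_trichotomy (u + 1) i with h | h | h
    · rw [hpre u (by omega), hpre (u + 1) h]
      exact ceilc_mono a b (by omega)
    · rw [hpre u (by omega), hmid1 (u + 1) (by omega) (by omega)]
      have e : u + 1 + 1 - i = 1 := by omega
      rw [e]
      have e2 : u + 1 = i := h
      rw [e2]
      omega
    · by_cases hj3 : u + 3 ≤ j
      · rw [hmid1 u (by omega) (by omega), hmid1 (u + 1) (by omega) (by omega)]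
        have := ceilc_mono a b (show u + 1 - i ≤ u + 1 + 1 - i by omega)
        omega
      · by_cases hj2 : u + 2 ≤ j
        · rw [hmid1 u (by omega) hj2, hmid2 (u + 1) (by omega) (by omega) (by omega)]
          have e1 : u + 1 - i = P := by omega
          have e2 : u + 1 + 1 - i = P + 1 := by omega
          rw [e1, e2, hcP, hcP1]
          omega
        · by_cases hm3 : u + 3 ≤ m
          · rw [hmid2 u (by omega) (by omega) (by omega),
              hmid2 (u + 1) (by omega) (by omega) (by omega)]
            have := ceilc_mono a b (show u + 1 - i ≤ u + 1 + 1 - i by omega)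
            omega
          · by_cases hm2 : u + 2 ≤ m
            · rw [hmid2 u (by omega) (by omega) hm2, htail (u + 1) (by omega)]
              have e1 : u + 1 - i = Q := by omega
              rw [e1, hcQ]
              omega
            · rw [htail u (by omega), htail (u + 1) (by omega)]
  -- normalization
  have hnorm : ∀ x, b ≤ x → pathH a b i j m y1 x = a := fun x hx => htail x (by omega)
  -- staying above the line
  have habove : ∀ x, x < b → a * (x + 1) ≤ b * pathH a b i j m y1 x := by
    intro x hx
    by_cases h0 : x < i
    · rw [hpre x h0]
      exact (ceilc_bounds a b (x + 1) hb).1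
    · by_cases hj2 : x + 2 ≤ j
      · rw [hmid1 x (by omega) hj2]
        obtain ⟨n, hn⟩ : ∃ n, x + 1 = i + n := ⟨x + 1 - i, by omega⟩
        have e : x + 1 - i = n := by omega
        rw [e]
        have hcl := (ceilc_bounds a b n hb).1
        have e2 : b * (y1 + 1 + ceilc a b n) = b * y1 + b + b * ceilc a b n := by ring
        have e3 : a * (x + 1) = a * i + a * n := by rw [hn]; ring
        omega
      · by_cases hm2 : x + 2 ≤ m
        · rw [hmid2 x (by omega) (by omega) hm2]
          obtain ⟨n, hn⟩ : ∃ n, x + 1 = i + n := ⟨x + 1 - i, by omega⟩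
          have e : x + 1 - i = n := by omega
          rw [e]
          have hcl := (ceilc_bounds a b n hb).1
          have e2 : b * (y1 + ceilc a b n) = b * y1 + b * ceilc a b n := by ring
          have e3 : a * (x + 1) = a * i + a * n := by rw [hn]; ring
          omega
        · rw [htail x (by omega)]
          have h4 : a * (x + 1) ≤ a * b := Nat.mul_le_mul_left a (by omega)
          omega
  refine ⟨⟨pathH a b i j m y1, hmono, hnorm, habove⟩, ?_⟩
  intro d hd
  simp only [Finset.mem_insert, Finset.mem_singleton] at hd
  rcases hd with rfl | rfl
  · -- the diagonal (i, j), from the point (i, y1 + 1)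
    refine ⟨y1 + 1, ⟨by omega, ?_, ?_⟩, ?_, hij, hjb, ?_, ?_⟩
    · -- lower bound at column i
      dsimp only
      by_cases hi0 : i = 0
      · rw [if_pos hi0]; omega
      · rw [if_neg hi0]
        show pathH a b i j m y1 (i - 1) ≤ y1 + 1
        rw [hpre (i - 1) (by omega)]
        have e : i - 1 + 1 = i := by omega
        rw [e]
        omega
    · show y1 + 1 < pathH a b i j m y1 i
      rw [hmid1 i le_rfl (by omega)]
      have e : i + 1 - i = 1 := by omega
      rw [e]
      omega
    · intro hcon
      rw [Prod.mk.injEq] at hcon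
      omega
    · -- laser hit at column j
      show b * pathH a b i j m y1 (j - 1) < b * (y1 + 1) + a * (j - i)
      rw [hmid2 (j - 1) (by omega) (by omega) (by omega)]
      have e : j - 1 + 1 - i = P + 1 := by omega
      rw [e, hcP1]
      have e2 : j - i = P + 1 := by omega
      rw [e2]
      have r1 : b * (y1 + (s + 1)) = b * y1 + b * s + b := by ring
      have r2 : b * (y1 + 1) = b * y1 + b := by ring
      omega
    · -- laser misses earlier east steps
      intro u hu hu1
      show b * (y1 + 1) + a * (u + 1 - i) < b * pathH a b i j m y1 u
      rw [hmid1 u hu (by omega)]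
      obtain ⟨n, hn⟩ : ∃ n, u + 1 = i + n := ⟨u + 1 - i, by omega⟩
      have e : u + 1 - i = n := by omega
      rw [e]
      have hstr : a * n < b * ceilc a b n := ceilc_strict a b n hb hcop (by omega) (by omega)
      have r1 : b * (y1 + 1 + ceilc a b n) = b * y1 + b + b * ceilc a b n := by ring
      have r2 : b * (y1 + 1) = b * y1 + b := by ring
      omega
  · -- the diagonal (i, m), from the point (i, y1)
    refine ⟨y1, ⟨by omega, ?_, ?_⟩, ?_, by omega, hmb, ?_, ?_⟩
    · dsimp only
      by_cases hi0 : i = 0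
      · rw [if_pos hi0]; omega
      · rw [if_neg hi0]
        show pathH a b i j m y1 (i - 1) ≤ y1
        rw [hpre (i - 1) (by omega)]
        have e : i - 1 + 1 = i := by omega
        rw [e]
        omega
    · show y1 < pathH a b i j m y1 i
      rw [hmid1 i le_rfl (by omega)]
      omega
    · intro hcon
      rw [Prod.mk.injEq] at hcon
      omega
    · show b * pathH a b i j m y1 (m - 1) < b * y1 + a * (m - i)
      rw [htail (m - 1) (by omega)]
      have e2 : m - i = Q + 1 := by omega
      rw [e2]
      omega
    · intro u hu hu1
      show b * y1 + a * (u + 1 - i) < b * pathH a b i j m y1 u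
      obtain ⟨n, hn⟩ : ∃ n, u + 1 = i + n := ⟨u + 1 - i, by omega⟩
      have e : u + 1 - i = n := by omega
      by_cases hj2 : u + 2 ≤ j
      · rw [hmid1 u hu hj2, e]
        have hcl := (ceilc_bounds a b n hb).1
        have r1 : b * (y1 + 1 + ceilc a b n) = b * y1 + b + b * ceilc a b n := by ring
        omega
      · rw [hmid2 u hu (by omega) (by omega), e]
        have hstr : a * n < b * ceilc a b n := ceilc_strict a b n hb hcop (by omega) (by omega)
        have r1 : b * (y1 + ceilc a b n) = b * y1 + b * ceilc a b n := by ring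
        omega
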